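/- Define Λ̄_n := ∑_{i=0}^{n−1} C(n,i)(n−i) Λ_i for n ≥ 1 (and Λ̄_0 = 0), where Λ_0 = 1 and Λ_n = ∑_{i=0}^{n−1} C(n,i) Λ_i. Then for any real α with 0 < α ≤ ln 2 satisfying α·e^α ≤ 1 (in particular α = 1/2), we have Λ̄_n ≤ n! / α^n for all n ≥ 1. -/

import Mathlib

open Finset

/-- Key algebraic identity: `C(n,i) * i! / α^i = (n!/α^n) * α^(n-i)/(n-i)!` for `i ≤ n`. -/
lemma choose_fact_div_pow {α : ℝ} (hα0 : 0 < α) {n i : ℕ} (hin : i ≤ n) :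
    (n.choose i : ℝ) * ((Nat.factorial i : ℝ) / α ^ i)
      = ((Nat.factorial n : ℝ) / α ^ n) * (α ^ (n - i) / (Nat.factorial (n - i) : ℝ)) := by
  have key : (n.choose i : ℝ) * (Nat.factorial i : ℝ) * (Nat.factorial (n - i) : ℝ)
      = (Nat.factorial n : ℝ) := by
    exact_mod_cast congrArg (Nat.cast (R := ℝ)) (Nat.choose_mul_factorial_mul_factorial hin)
  have hpow : α ^ (n - i) * α ^ i = α ^ n := pow_sub_mul_pow α hin
  have hfi : (Nat.factorial (n - i) : ℝ) ≠ 0 := by positivity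
  have hαn : α ^ n ≠ 0 := by positivity
  have hαi : α ^ i ≠ 0 := by positivity
  field_simp
  linear_combination α ^ n * key - (Nat.factorial n : ℝ) * hpow

lemma exp_le_two {α : ℝ} (hα : α ≤ Real.log 2) : Real.exp α ≤ 2 := by
  calc Real.exp α ≤ Real.exp (Real.log 2) := Real.exp_le_exp.mpr hα
    _ = 2 := Real.exp_log (by norm_num)

/-- The ordered Bell numbers satisfy `Λ n ≤ n!/α^n`. -/
lemma orderedBell_le {Λ : ℕ → ℝ} (h0 : Λ 0 = 1)
    (hrec : ∀ n : ℕ, 1 ≤ n → Λ n = ∑ i ∈ Finset.range n, (n.choose i : ℝ) * Λ i)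
    {α : ℝ} (hα0 : 0 < α) (hα : α ≤ Real.log 2) :
    ∀ n : ℕ, Λ n ≤ (Nat.factorial n : ℝ) / α ^ n := by
  intro n
  induction n using Nat.strong_induction_on with
  | _ n IH =>
    rcases Nat.eq_zero_or_pos n with rfl | hn
    · simp [h0]
    · rw [hrec n hn]
      calc ∑ i ∈ range n, (n.choose i : ℝ) * Λ i
          ≤ ∑ i ∈ range n, (n.choose i : ℝ) * ((Nat.factorial i : ℝ) / α ^ i) := by
            apply Finset.sum_le_sum
            intro i hi
            exact mul_le_mul_of_nonneg_left (IH i (mem_range.mp hi)) (by positivity)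
        _ = ((Nat.factorial n : ℝ) / α ^ n) *
              ∑ i ∈ range n, α ^ (n - i) / (Nat.factorial (n - i) : ℝ) := by
            rw [Finset.mul_sum]
            apply Finset.sum_congr rfl
            intro i hi
            exact choose_fact_div_pow hα0 (le_of_lt (mem_range.mp hi))
        _ ≤ ((Nat.factorial n : ℝ) / α ^ n) * 1 := by
            apply mul_le_mul_of_nonneg_left _ (by positivity)
            have hre : ∑ i ∈ range n, α ^ (n - i) / (Nat.factorial (n - i) : ℝ)
                = ∑ j ∈ range n, α ^ (j + 1) / (Nat.factorial (j + 1) : ℝ) := by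
              rw [← Finset.sum_range_reflect]
              apply Finset.sum_congr rfl
              intro i hi
              have hi' : i < n := mem_range.mp hi
              have h : n - (n - 1 - i) = i + 1 := by omega
              rw [h]
            rw [hre]
            have h := Real.sum_le_exp_of_nonneg (le_of_lt hα0) (n + 1)
            rw [Finset.sum_range_succ'] at h
            norm_num at h
            have := exp_le_two hα
            linarith
        _ = (Nat.factorial n : ℝ) / α ^ n := mul_one _

/-- Key algebraic identity for the bar sum: for `i < n`,
`C(n,i)(n-i) * i! / α^i = (n!/α^n) * α^(n-i)/(n-1-i)!`. -/
lemma choose_fact_div_pow_bar {α : ℝ} (hα0 : 0 < α) {n i : ℕ} (hin : i < n) :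
    (n.choose i : ℝ) * ((n : ℝ) - i) * ((Nat.factorial i : ℝ) / α ^ i)
      = ((Nat.factorial n : ℝ) / α ^ n) * (α ^ (n - i) / (Nat.factorial (n - 1 - i) : ℝ)) := by
  have hcast : ((n : ℝ) - i) = ((n - i : ℕ) : ℝ) := by
    rw [Nat.cast_sub (le_of_lt hin)]
  have hfacsplit : (Nat.factorial (n - i) : ℝ) = ((n - i : ℕ) : ℝ) * (Nat.factorial (n - 1 - i) : ℝ) := by
    have h1 : n - i = (n - 1 - i) + 1 := by omega
    rw [h1, Nat.factorial_succ]
    push_cast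
    ring
  have key : (n.choose i : ℝ) * (Nat.factorial i : ℝ) * (Nat.factorial (n - i) : ℝ)
      = (Nat.factorial n : ℝ) := by
    exact_mod_cast congrArg (Nat.cast (R := ℝ))
      (Nat.choose_mul_factorial_mul_factorial (le_of_lt hin))
  have hpow : α ^ (n - i) * α ^ i = α ^ n := pow_sub_mul_pow α (le_of_lt hin)
  have hfi : (Nat.factorial (n - 1 - i) : ℝ) ≠ 0 := by positivity
  have hαn : α ^ n ≠ 0 := by positivity
  have hαi : α ^ i ≠ 0 := by positivity
  rw [hcast]
  rw [hfacsplit] at key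
  field_simp
  linear_combination α ^ n * key - (Nat.factorial n : ℝ) * hpow

/-- With `Λ` the ordered Bell numbers and `Λ̄_n = ∑_{i=0}^{n−1} C(n,i)(n−i)Λ_i`,
for any real `α` with `0 < α ≤ ln 2` and `α·e^α ≤ 1` (in particular `α = 1/2`),
we have `Λ̄_n ≤ n!/α^n` for all `n ≥ 1`. -/
theorem orderedBellBar_le_factorial_div_pow
    (Λ : ℕ → ℝ) (h0 : Λ 0 = 1)
    (hrec : ∀ n : ℕ, 1 ≤ n → Λ n = ∑ i ∈ Finset.range n, (n.choose i : ℝ) * Λ i)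
    (Λbar : ℕ → ℝ) (hbar0 : Λbar 0 = 0)
    (hbar : ∀ n : ℕ, 1 ≤ n →
      Λbar n = ∑ i ∈ Finset.range n, (n.choose i : ℝ) * ((n : ℝ) - i) * Λ i)
    (α : ℝ) (hα0 : 0 < α) (hα : α ≤ Real.log 2) (hαe : α * Real.exp α ≤ 1) :
    ∀ n : ℕ, 1 ≤ n → Λbar n ≤ (Nat.factorial n : ℝ) / α ^ n := by
  intro n hn
  rw [hbar n hn]
  calc ∑ i ∈ range n, (n.choose i : ℝ) * ((n : ℝ) - i) * Λ i
      ≤ ∑ i ∈ range n, (n.choose i : ℝ) * ((n : ℝ) - i) * ((Nat.factorial i : ℝ) / α ^ i) := by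
        apply Finset.sum_le_sum
        intro i hi
        have hin : i < n := mem_range.mp hi
        have hnn : (0:ℝ) ≤ (n.choose i : ℝ) * ((n : ℝ) - i) := by
          apply mul_nonneg (by positivity)
          have : (i : ℝ) < n := by exact_mod_cast hin
          linarith
        exact mul_le_mul_of_nonneg_left (orderedBell_le h0 hrec hα0 hα i) hnn
    _ = ((Nat.factorial n : ℝ) / α ^ n) *
          ∑ i ∈ range n, α ^ (n - i) / (Nat.factorial (n - 1 - i) : ℝ) := by
        rw [Finset.mul_sum]
        apply Finset.sum_congr rfl
        intro i hi
        exact choose_fact_div_pow_bar hα0 (mem_range.mp hi)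
    _ ≤ ((Nat.factorial n : ℝ) / α ^ n) * 1 := by
        apply mul_le_mul_of_nonneg_left _ (by positivity)
        have hre : ∑ i ∈ range n, α ^ (n - i) / (Nat.factorial (n - 1 - i) : ℝ)
            = ∑ j ∈ range n, α ^ (j + 1) / (Nat.factorial j : ℝ) := by
          rw [← Finset.sum_range_reflect]
          apply Finset.sum_congr rfl
          intro i hi
          have hi' : i < n := mem_range.mp hi
          have h1 : n - (n - 1 - i) = i + 1 := by omega
          have h2 : n - 1 - (n - 1 - i) = i := by omega
          rw [h1, h2]
        rw [hre]
        have hfactor : ∑ j ∈ range n, α ^ (j + 1) / (Nat.factorial j : ℝ)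
            = α * ∑ j ∈ range n, α ^ j / (Nat.factorial j : ℝ) := by
          rw [Finset.mul_sum]
          apply Finset.sum_congr rfl
          intro j _
          rw [pow_succ]
          ring
        rw [hfactor]
        calc α * ∑ j ∈ range n, α ^ j / (Nat.factorial j : ℝ)
            ≤ α * Real.exp α := by
              apply mul_le_mul_of_nonneg_left
                (Real.sum_le_exp_of_nonneg (le_of_lt hα0) n) (le_of_lt hα0)
          _ ≤ 1 := hαe
    _ = (Nat.factorial n : ℝ) / α ^ n := mul_one _
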